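/- Let 𝕋 be a pretheory. (a) Every derivable judgment has height at least 1, the empty precontext is the only context of height 0, and the empty tuple () : ∅ → ∅ is the only context morphism of height 0. (b) If X ⊢ U sort is derivable then ht(X ⊢ U sort) > ht(X); consequently for a context X of length n and 0 ≤ i < n, ht(∂ᵢX) < ht(X). (c) If X ⊢ U ≡ U' sort is derivable then X ⊢ U sort and X ⊢ U' sort are derivable of strictly smaller height. (d) If X ⊢ u : U is derivable then X ⊢ U sort is derivable and ht(X ⊢ u:U) > ht(X ⊢ U sort). (e) If X ⊢ u ≡ u' : U is derivable then X ⊢ u:U and X ⊢ u':U are derivable of strictly smaller height. (f) If X ⊢ u : U is derivable then X ⊢ u : 𝒮(u) is derivable with ht(X ⊢ u:U) ≥ ht(X ⊢ u:𝒮(u)), this inequality being strict if and only if U ≠ 𝒮(u), and X ⊢ 𝒮(u) ≡ U sort is derivable with ht(X ⊢ u:U) ≥ ht(X ⊢ 𝒮(u) ≡ U sort). (g) If X ⊢ u term is derivable then ht(X ⊢ u term) = ht(X ⊢ u:𝒮(u)). (h) If X ⊢ T(f₁,…,f_k) sort is derivable then ht(X ⊢ T(f₁,…,f_k) sort) > ht(X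 ⊢ fᵢ:𝒮(fᵢ)) for each i, and if it is not an axiom then also ht(X ⊢ T(f₁,…,f_k) sort) > ht((f₁,…,f_k) : X → A), where A ⊢ T(a₁,…,a_k) sort is the axiom introducing T. (i) If X ⊢ t(f₁,…,f_k) : U is derivable then ht(X ⊢ t(f₁,…,f_k):U) > ht(X ⊢ fᵢ term) for each i. (j) For a context morphism f = (f₁,…,fₙ) : X → Y, ht(f : X → Y) ≥ ht(X ⊢ fᵢ term) for each i, and for a derivable morphism equality f ≡ g : X → Y, ht(f ≡ g : X → Y) ≥ ht(f : X → Y) and ht(f ≡ g : X → Y) ≥ ht(g : X → Y). -/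

import Mathlib

set_option linter.unusedVariables false

/-! # Syntax of generalized algebraic theories (following Cartmell / the paper's appendix) -/

namespace GATPaper

/-- A sort-and-term alphabet: a countably infinite set of variables, a set of sort
symbols and a set of term symbols. -/
structure Alphabet : Type 1 where
  Var : Type
  SortSym : Type
  TermSym : Type
  var_infinite : Infinite Var
  var_countable : Countable Var

attribute [instance] Alphabet.var_infinite Alphabet.var_countable

variable {A B : Alphabet}

/-- Term expressions over an alphabet. -/
inductive Expr (A : Alphabet) : Type where
  | var : A.Var → Expr A
  | app : A.TermSym → List (Expr A) → Expr A

/-- Sort expressions: a sort symbol applied to a list of term expressions. -/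
structure SortE (A : Alphabet) : Type where
  head : A.SortSym
  args : List (Expr A)

/-- Occurrence of a variable in a term expression. -/
inductive Occurs (x : A.Var) : Expr A → Prop where
  | var : Occurs x (Expr.var x)
  | app {t : A.TermSym} {es : List (Expr A)} {e : Expr A} :
      e ∈ es → Occurs x e → Occurs x (Expr.app t es)

/-- Occurrence of a variable in a sort expression. -/
def SOccurs (x : A.Var) (U : SortE A) : Prop := ∃ e ∈ U.args, Occurs x e

/-- Simultaneous substitution along a function on variables. -/
def Expr.subst (σ : A.Var → Expr A) : Expr A → Expr A
  | .var x => σ x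
  | .app t es => .app t (es.attach.map fun e => Expr.subst σ e.1)
termination_by e => sizeOf e
decreasing_by
  have := List.sizeOf_lt_of_mem e.2
  simp only [Expr.app.sizeOf_spec]
  omega

def SortE.subst (σ : A.Var → Expr A) (U : SortE A) : SortE A :=
  ⟨U.head, U.args.map (Expr.subst σ)⟩

open Classical in
/-- The function on variables determined by a finite list of substitution pairs
`(zᵢ, uᵢ)` (substituting `uᵢ` for `zᵢ`, first matching pair winning, all other
variables unchanged). -/
noncomputable def lookupV : List (A.Var × Expr A) → A.Var → Expr A
  | [], x => .var x
  | p :: ps, x => if p.1 = x then p.2 else lookupV ps x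

/-- The simultaneous substitution `e[u₁ | z₁, …, u_k | z_k]` where
`ps = [(z₁,u₁),…,(z_k,u_k)]`. -/
noncomputable def Expr.substL (e : Expr A) (ps : List (A.Var × Expr A)) : Expr A :=
  e.subst (lookupV ps)

noncomputable def SortE.substL (U : SortE A) (ps : List (A.Var × Expr A)) : SortE A :=
  U.subst (lookupV ps)

/-- A (pre)context is a finite list of (variable, sort expression) pairs. -/
abbrev PreCtx (A : Alphabet) := List (A.Var × SortE A)

/-- The list of variables of a precontext, as term expressions. -/
def ctxVars (X : PreCtx A) : List (Expr A) := X.map fun p => Expr.var p.1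

/-- The scoping condition of a precontext: the `i`-th sort expression only contains
variables among the first `i` variables. -/
def IsPreCtx (X : PreCtx A) : Prop :=
  ∀ i (hi : i < X.length) (v : A.Var),
    SOccurs v (X[i]'hi).2 → v ∈ (X.take i).map Prod.fst

/-- Substitution pairs sending the variables of `X` to the entries of `f`. -/
def mkSub (X : PreCtx A) (f : List (Expr A)) : List (A.Var × Expr A) :=
  (X.map Prod.fst).zip f

/-- `Xᵢ[f₁ | x₁, …, f_{i-1} | x_{i-1}]` (0-based: the `i`-th sort of `X`
substituted along the first `i` entries of `f`). -/
noncomputable def subPre (X : PreCtx A) (f : List (Expr A)) (i : ℕ) (hi : i < X.length) :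
    SortE A :=
  ((X[i]'hi).2).substL (mkSub (X.take i) (f.take i))

/-- Judgments: context judgments and the four kinds of standard judgments. -/
inductive Judg (A : Alphabet) : Type where
  | ctx (X : PreCtx A)
  | sort (X : PreCtx A) (U : SortE A)
  | term (X : PreCtx A) (u : Expr A) (U : SortE A)
  | sortEq (X : PreCtx A) (U V : SortE A)
  | termEq (X : PreCtx A) (u v : Expr A) (U : SortE A)

/-- The context of a judgment. -/
def Judg.ctxOf : Judg A → PreCtx A
  | .ctx X => X
  | .sort X _ => X
  | .term X _ _ => X
  | .sortEq X _ _ => X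
  | .termEq X _ _ _ => X

/-- The judgment introducing a sort symbol over the context `X`. -/
def introSort (X : PreCtx A) (S : A.SortSym) : Judg A := .sort X ⟨S, ctxVars X⟩

/-- The judgment introducing a term symbol over the context `X`, with sort `U`. -/
def introTerm (X : PreCtx A) (t : A.TermSym) (U : SortE A) : Judg A :=
  .term X (.app t (ctxVars X)) U

/-- A set of axioms is a pretheory if: no axiom is a context judgment, every
axiom's context is a precontext, every sort symbol has a unique introducing sort
axiom and there are no other sort axioms, and likewise for term symbols. -/
structure IsPretheory (Ax : Set (Judg A)) : Prop where
  no_ctx : ∀ X : PreCtx A, Judg.ctx X ∉ Ax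
  wf_ctx : ∀ J ∈ Ax, IsPreCtx J.ctxOf
  sort_intro : ∀ S : A.SortSym, ∃! X : PreCtx A, introSort X S ∈ Ax
  sort_shape : ∀ (X : PreCtx A) (U : SortE A), Judg.sort X U ∈ Ax → U.args = ctxVars X
  term_intro : ∀ t : A.TermSym, ∃! p : PreCtx A × SortE A, introTerm p.1 t p.2 ∈ Ax
  term_shape : ∀ (X : PreCtx A) (u : Expr A) (U : SortE A), Judg.term X u U ∈ Ax →
      ∃ t : A.TermSym, u = Expr.app t (ctxVars X)

/-- One inference step of the paper's system: `Step Ax D J` holds when `J` is the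
conclusion of an instance of one of the sixteen rules all of whose premises
satisfy `D`. -/
inductive Step (Ax : Set (Judg A)) (D : Judg A → Prop) : Judg A → Prop where
  | ctx_nil : Step Ax D (.ctx [])
  | ctx_cons {X : PreCtx A} {U : SortE A} {x : A.Var}
      (hs : D (.sort X U)) (hfresh : ∀ p ∈ X, p.1 ≠ x)
      (hpre : IsPreCtx (X ++ [(x, U)])) :
      Step Ax D (.ctx (X ++ [(x, U)]))
  | s1 {X : PreCtx A} {U : SortE A} (h : D (.sort X U)) : Step Ax D (.sortEq X U U)
  | s2 {X : PreCtx A} {U V : SortE A} (h : D (.sortEq X U V)) : Step Ax D (.sortEq X V U)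
  | s3 {X : PreCtx A} {U V W : SortE A}
      (h1 : D (.sortEq X U V)) (h2 : D (.sortEq X V W)) : Step Ax D (.sortEq X U W)
  | t1 {X : PreCtx A} {u : Expr A} {U : SortE A}
      (h : D (.term X u U)) : Step Ax D (.termEq X u u U)
  | t2 {X : PreCtx A} {u v : Expr A} {U : SortE A}
      (h : D (.termEq X u v U)) : Step Ax D (.termEq X v u U)
  | t3 {X : PreCtx A} {u v w : Expr A} {U : SortE A}
      (h1 : D (.termEq X u v U)) (h2 : D (.termEq X v w U)) : Step Ax D (.termEq X u w U)
  | seqt {X : PreCtx A} {U U' : SortE A} {u : Expr A}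
      (h1 : D (.sortEq X U U')) (h2 : D (.term X u U)) : Step Ax D (.term X u U')
  | seqteq {X : PreCtx A} {U U' : SortE A} {u u' : Expr A}
      (h1 : D (.sortEq X U U')) (h2 : D (.termEq X u u' U))
      (h3 : D (.term X u U')) (h4 : D (.term X u' U')) : Step Ax D (.termEq X u u' U')
  | var {X : PreCtx A} {i : ℕ} (hi : i < X.length)
      (h : D (.sort X (X[i]'hi).2)) :
      Step Ax D (.term X (.var (X[i]'hi).1) (X[i]'hi).2)
  | sA {X : PreCtx A} {U : SortE A} (hax : Judg.sort X U ∈ Ax) (h : D (.ctx X))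
      (hv : ∀ i (hi : i < X.length), D (.term X (.var (X[i]'hi).1) (X[i]'hi).2)) :
      Step Ax D (.sort X U)
  | tA {X : PreCtx A} {u : Expr A} {U : SortE A} (hax : Judg.term X u U ∈ Ax)
      (h : D (.sort X U))
      (hv : ∀ i (hi : i < X.length), D (.term X (.var (X[i]'hi).1) (X[i]'hi).2)) :
      Step Ax D (.term X u U)
  | seqA {X : PreCtx A} {U U' : SortE A} (hax : Judg.sortEq X U U' ∈ Ax)
      (h1 : D (.sort X U)) (h2 : D (.sort X U')) : Step Ax D (.sortEq X U U')
  | teqA {X : PreCtx A} {u u' : Expr A} {U : SortE A} (hax : Judg.termEq X u u' U ∈ Ax)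
      (h1 : D (.term X u U)) (h2 : D (.term X u' U)) : Step Ax D (.termEq X u u' U)
  | sSub {X : PreCtx A} {S : A.SortSym} (hax : introSort X S ∈ Ax)
      {Y : PreCtx A} (hY : IsPreCtx Y) {f : List (Expr A)} (hlen : f.length = X.length)
      (hJ : D (introSort X S)) (hYc : D (.ctx Y))
      (hargs : ∀ i (hi : i < X.length) (hif : i < f.length),
        D (.term Y (f[i]'hif) (subPre X f i hi))) :
      Step Ax D (.sort Y ⟨S, f⟩)
  | tSub {X : PreCtx A} {t : A.TermSym} {U : SortE A} (hax : introTerm X t U ∈ Ax)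
      {Y : PreCtx A} (hY : IsPreCtx Y) {f : List (Expr A)} (hlen : f.length = X.length)
      (hJ : D (introTerm X t U))
      (hU : D (.sort Y (U.substL (mkSub X f))))
      (hargs : ∀ i (hi : i < X.length) (hif : i < f.length),
        D (.term Y (f[i]'hif) (subPre X f i hi))) :
      Step Ax D (.term Y (.app t f) (U.substL (mkSub X f)))
  | seqSub1 {X : PreCtx A} {U U' : SortE A} (hax : Judg.sortEq X U U' ∈ Ax)
      {Y : PreCtx A} (hY : IsPreCtx Y) {f : List (Expr A)} (hlen : f.length = X.length)
      (hJ : D (.sortEq X U U'))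
      (h1 : D (.sort Y (U.substL (mkSub X f)))) (h2 : D (.sort Y (U'.substL (mkSub X f))))
      (hargs : ∀ i (hi : i < X.length) (hif : i < f.length),
        D (.term Y (f[i]'hif) (subPre X f i hi))) :
      Step Ax D (.sortEq Y (U.substL (mkSub X f)) (U'.substL (mkSub X f)))
  | seqSub2 {X : PreCtx A} {S : A.SortSym} (hax : introSort X S ∈ Ax)
      {Y : PreCtx A} (hY : IsPreCtx Y) {f g : List (Expr A)}
      (hlf : f.length = X.length) (hlg : g.length = X.length)
      (hJ : D (introSort X S))
      (h1 : D (.sort Y ⟨S, f⟩)) (h2 : D (.sort Y ⟨S, g⟩))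
      (hargs : ∀ i (hi : i < X.length) (hif : i < f.length) (hig : i < g.length),
        D (.termEq Y (f[i]'hif) (g[i]'hig) (subPre X f i hi))) :
      Step Ax D (.sortEq Y ⟨S, f⟩ ⟨S, g⟩)
  | teqSub1 {X : PreCtx A} {u u' : Expr A} {U : SortE A}
      (hax : Judg.termEq X u u' U ∈ Ax)
      {Y : PreCtx A} (hY : IsPreCtx Y) {f : List (Expr A)} (hlen : f.length = X.length)
      (hJ : D (.termEq X u u' U))
      (h1 : D (.term Y (u.substL (mkSub X f)) (U.substL (mkSub X f))))
      (h2 : D (.term Y (u'.substL (mkSub X f)) (U.substL (mkSub X f))))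
      (hargs : ∀ i (hi : i < X.length) (hif : i < f.length),
        D (.term Y (f[i]'hif) (subPre X f i hi))) :
      Step Ax D (.termEq Y (u.substL (mkSub X f)) (u'.substL (mkSub X f))
        (U.substL (mkSub X f)))
  | teqSub2 {X : PreCtx A} {t : A.TermSym} {U : SortE A} (hax : introTerm X t U ∈ Ax)
      {Y : PreCtx A} (hY : IsPreCtx Y) {f g : List (Expr A)}
      (hlf : f.length = X.length) (hlg : g.length = X.length)
      (hJ : D (introTerm X t U))
      (h1 : D (.term Y (.app t f) (U.substL (mkSub X f))))
      (h2 : D (.term Y (.app t g) (U.substL (mkSub X f))))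
      (hargs : ∀ i (hi : i < X.length) (hif : i < f.length) (hig : i < g.length),
        D (.termEq Y (f[i]'hif) (g[i]'hig) (subPre X f i hi))) :
      Step Ax D (.termEq Y (.app t f) (.app t g) (U.substL (mkSub X f)))

/-- `DerAt Ax n J`: `J` is the conclusion of an inference step in the `n`-th stage
`𝒟ₙ` of the recursive construction of the derivable judgments. -/
def DerAt (Ax : Set (Judg A)) : ℕ → Judg A → Prop
  | 0, _ => False
  | n + 1, J => DerAt Ax n J ∨ Step Ax (DerAt Ax n) J

/-- A judgment is derivable if it is the conclusion of a step of some stage. -/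
def Derivable (Ax : Set (Judg A)) (J : Judg A) : Prop := ∃ n, DerAt Ax n J

/-- The height of a (derivable) judgment: the least stage at which it appears. -/
noncomputable def ht (Ax : Set (Judg A)) (J : Judg A) : ℕ := sInf {n | DerAt Ax n J}

/-- The height of a context: `0` for the empty context, and the height of
`∂X ⊢ Xₙ sort` otherwise. -/
noncomputable def htCtx (Ax : Set (Judg A)) (X : PreCtx A) : ℕ :=
  match X with
  | [] => 0
  | p :: X' =>
      ht Ax (.sort ((p :: X').dropLast) (((p :: X').getLast (List.cons_ne_nil p X')).2))

/-- A generalized algebraic theory: a pretheory all of whose axioms are derivable. -/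
def IsGAT (Ax : Set (Judg A)) : Prop := IsPretheory Ax ∧ ∀ J ∈ Ax, Derivable Ax J

/-- The partial term judgment `X ⊢ u term` is derivable. -/
def DerTerm (Ax : Set (Judg A)) (X : PreCtx A) (u : Expr A) : Prop :=
  ∃ U, Derivable Ax (.term X u U)

/-- The partial term equality judgment `X ⊢ u ≡ v term` is derivable. -/
def DerTermEq (Ax : Set (Judg A)) (X : PreCtx A) (u v : Expr A) : Prop :=
  ∃ U, Derivable Ax (.termEq X u v U)

/-- Height of a derivable partial term judgment: the minimum of the heights of
`X ⊢ u : U` over all `U`. -/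
noncomputable def htTerm (Ax : Set (Judg A)) (X : PreCtx A) (u : Expr A) : ℕ :=
  sInf {n | ∃ U, DerAt Ax n (.term X u U)}

/-- `f` is a context morphism from `X` to `Y`. -/
def IsMor (Ax : Set (Judg A)) (X Y : PreCtx A) (f : List (Expr A)) : Prop :=
  Derivable Ax (.ctx X) ∧ Derivable Ax (.ctx Y) ∧ f.length = Y.length ∧
  ∀ i (hi : i < Y.length) (hif : i < f.length),
    Derivable Ax (.term X (f[i]'hif) (subPre Y f i hi))

/-- The morphism equality `f ≡ g : X → Y` is derivable. -/
def MorEq (Ax : Set (Judg A)) (X Y : PreCtx A) (f g : List (Expr A)) : Prop :=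
  IsMor Ax X Y f ∧ IsMor Ax X Y g ∧
  ∀ i (hi : i < Y.length) (hif : i < f.length) (hig : i < g.length),
    Derivable Ax (.termEq X (f[i]'hif) (g[i]'hig) (subPre Y f i hi))

/-- The context equality `X ≡ Y ctx` is derivable. -/
def CtxEq (Ax : Set (Judg A)) (X Y : PreCtx A) : Prop :=
  X.length = Y.length ∧ Derivable Ax (.ctx X) ∧ Derivable Ax (.ctx Y) ∧
  ∀ i (hX : i < X.length) (hY : i < Y.length),
    Derivable Ax (.sortEq (X.take i) (X[i]'hX).2
      (((Y[i]'hY).2).substL (mkSub (Y.take i) (ctxVars (X.take i)))))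

/-- Height of a context morphism. -/
noncomputable def htMor (Ax : Set (Judg A)) (X Y : PreCtx A) (f : List (Expr A)) : ℕ :=
  max (htCtx Ax X) (max (htCtx Ax Y)
    ((Finset.range Y.length).sup fun i =>
      if h : i < Y.length ∧ i < f.length then
        ht Ax (.term X (f[i]'h.2) (subPre Y f i h.1))
      else 0))

/-- Height of a morphism equality. -/
noncomputable def htMorEq (Ax : Set (Judg A)) (X Y : PreCtx A) (f g : List (Expr A)) : ℕ :=
  max (htMor Ax X Y f) (max (htMor Ax X Y g)
    ((Finset.range Y.length).sup fun i =>
      if h : i < Y.length ∧ i < f.length ∧ i < g.length then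
        ht Ax (.termEq X (f[i]'h.2.1) (g[i]'h.2.2) (subPre Y f i h.1))
      else 0))

/-- The composite `g ∘ f` of tuples of term expressions, where `f : X → Y` and
`g : Y → Z`: the `i`-th entry is `gᵢ[f]`. -/
noncomputable def compMor (Y : PreCtx A) (f g : List (Expr A)) : List (Expr A) :=
  g.map fun e => e.substL (mkSub Y f)

/-- The canonical sort `𝒮(u)` of a term in a context (as a relation). -/
inductive CanonSort (Ax : Set (Judg A)) (X : PreCtx A) : Expr A → SortE A → Prop where
  | var {i : ℕ} (hi : i < X.length) : CanonSort Ax X (.var (X[i]'hi).1) (X[i]'hi).2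
  | app {t : A.TermSym} {f : List (Expr A)} {Xa : PreCtx A} {V : SortE A}
      (hax : introTerm Xa t V ∈ Ax) :
      CanonSort Ax X (.app t f) (V.substL (mkSub Xa f))


section Aux
set_option linter.dupNamespace false
variable {A : Alphabet} {Ax : Set (Judg A)}

lemma derAt_mono : ∀ {n m : ℕ}, n ≤ m → ∀ {J : Judg A}, DerAt Ax n J → DerAt Ax m J := by
  intro n m h
  induction m with
  | zero => intro J hJ; interval_cases n; exact hJ
  | succ m ih =>
    intro J hJ
    rcases Nat.lt_or_ge n (m+1) with h' | h'
    · exact Or.inl (ih (Nat.lt_succ_iff.mp h') hJ)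
    · have : n = m + 1 := le_antisymm h h'
      subst this; exact hJ

lemma ht_le {n : ℕ} {J : Judg A} (h : DerAt Ax n J) : ht Ax J ≤ n := Nat.sInf_le h

lemma derAt_ht {J : Judg A} (h : Derivable Ax J) : DerAt Ax (ht Ax J) J := Nat.sInf_mem h

lemma ht_pos {J : Judg A} (h : Derivable Ax J) : 1 ≤ ht Ax J := by
  by_contra hc
  have h0 : ht Ax J = 0 := by omega
  have := derAt_ht h
  rw [h0] at this
  exact this

lemma inversion {J : Judg A} (h : Derivable Ax J) :
    Step Ax (DerAt Ax (ht Ax J - 1)) J := by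
  have h1 := ht_pos h
  have h2 := derAt_ht h
  obtain ⟨k, hk⟩ : ∃ k, ht Ax J = k + 1 := ⟨ht Ax J - 1, by omega⟩
  rw [hk] at h2
  rcases h2 with h2 | h2
  · exact absurd (ht_le h2) (by omega)
  · rw [hk]; simpa using h2


lemma lookupV_eq_var (ps : List (A.Var × Expr A)) (hps : ∀ p ∈ ps, p.2 = .var p.1)
    (x : A.Var) : lookupV ps x = .var x := by
  induction ps with
  | nil => rfl
  | cons p ps ih =>
    rw [lookupV]
    split
    · rename_i h; rw [hps p (by simp), h]
    · exact ih (fun q hq => hps q (by simp [hq]))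

lemma Expr.subst_id (σ : A.Var → Expr A) (hσ : ∀ x, σ x = .var x) :
    ∀ e : Expr A, e.subst σ = e
  | .var x => by rw [Expr.subst]; exact hσ x
  | .app t es => by
    rw [Expr.subst]
    congr 1
    calc es.attach.map (fun e => Expr.subst σ e.1)
        = es.attach.map (fun e => e.1) := by
          refine List.map_congr_left fun e he => ?_
          have := List.sizeOf_lt_of_mem e.2
          exact Expr.subst_id σ hσ e.1
      _ = es := List.attach_map_subtype_val es
termination_by e => sizeOf e
decreasing_by
  simp only [Expr.app.sizeOf_spec]
  omega

lemma mkSub_ctxVars (X : PreCtx A) :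
    ∀ p ∈ mkSub X (ctxVars X), p.2 = .var p.1 := by
  intro p hp
  rw [mkSub, ctxVars] at hp
  rw [List.zip_map'] at hp
  obtain ⟨q, hq, rfl⟩ := List.mem_map.mp hp
  rfl

lemma SortE.substL_ctxVars (U : SortE A) (X : PreCtx A) :
    U.substL (mkSub X (ctxVars X)) = U := by
  cases U with
  | mk S args =>
    rw [SortE.substL, SortE.subst]
    simp only [SortE.mk.injEq, true_and]
    refine (List.map_congr_left fun e he => ?_).trans (List.map_id args)
    exact Expr.subst_id _ (lookupV_eq_var _ (mkSub_ctxVars X)) e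

lemma ctxVars_length (X : PreCtx A) : (ctxVars X).length = X.length := by
  simp [ctxVars]

lemma ctxVars_getElem (X : PreCtx A) (i : ℕ) (hi : i < X.length) :
    (ctxVars X)[i]'(by simp [ctxVars, hi]) = .var (X[i]'hi).1 := by
  simp [ctxVars]

lemma htCtx_ne_nil {X : PreCtx A} (h : X ≠ []) :
    htCtx Ax X = ht Ax (.sort X.dropLast ((X.getLast h).2)) := by
  cases X with
  | nil => exact absurd rfl h
  | cons p t => rfl

lemma htCtx_concat' (X' : PreCtx A) (x : A.Var) (U : SortE A) :
    htCtx Ax (X' ++ [(x, U)]) = ht Ax (.sort X' U) := by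
  rw [htCtx_ne_nil (by simp)]
  simp [List.dropLast_concat, List.getLast_concat]

lemma ctx_inv {X : PreCtx A} (h : Derivable Ax (.ctx X)) :
    X = [] ∨ ∃ X' x U, X = X' ++ [(x, U)] ∧ (∀ p ∈ X', p.1 ≠ x) ∧
      DerAt Ax (ht Ax (.ctx X) - 1) (.sort X' U) := by
  have hs := inversion h
  cases hs with
  | ctx_nil => exact Or.inl rfl
  | ctx_cons hs hfresh hpre => exact Or.inr ⟨_, _, _, rfl, hfresh, hs⟩

lemma htCtx_lt_ht_ctx {X : PreCtx A} (h : Derivable Ax (.ctx X)) :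
    htCtx Ax X < ht Ax (.ctx X) := by
  have h1 := ht_pos h
  rcases ctx_inv h with rfl | ⟨X', x, U, rfl, _, hd⟩
  · exact h1
  · rw [htCtx_concat']
    have := ht_le hd
    omega

/-- The context of any derivable judgment is a derivable context, at a stage no
later. -/
lemma der_ctx : ∀ n : ℕ, ∀ J : Judg A, DerAt Ax n J →
    ∃ m ≤ n, DerAt Ax m (.ctx J.ctxOf) := by
  intro n
  induction n with
  | zero => intro J hJ; exact absurd hJ id
  | succ n ih =>
    intro J hJ
    rcases hJ with hJ | hJ
    · obtain ⟨m, hm, h⟩ := ih J hJ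
      exact ⟨m, by omega, h⟩
    · cases hJ with
      | ctx_nil => exact ⟨n+1, le_refl _, Or.inr Step.ctx_nil⟩
      | ctx_cons hs hfresh hpre =>
        exact ⟨n+1, le_refl _, Or.inr (Step.ctx_cons hs hfresh hpre)⟩
      | s1 h => obtain ⟨m, hm, h'⟩ := ih _ h; exact ⟨m, by omega, h'⟩
      | s2 h => obtain ⟨m, hm, h'⟩ := ih _ h; exact ⟨m, by omega, h'⟩
      | s3 h1 h2 => obtain ⟨m, hm, h'⟩ := ih _ h1; exact ⟨m, by omega, h'⟩
      | t1 h => obtain ⟨m, hm, h'⟩ := ih _ h; exact ⟨m, by omega, h'⟩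
      | t2 h => obtain ⟨m, hm, h'⟩ := ih _ h; exact ⟨m, by omega, h'⟩
      | t3 h1 h2 => obtain ⟨m, hm, h'⟩ := ih _ h1; exact ⟨m, by omega, h'⟩
      | seqt h1 h2 => obtain ⟨m, hm, h'⟩ := ih _ h1; exact ⟨m, by omega, h'⟩
      | seqteq h1 h2 h3 h4 => obtain ⟨m, hm, h'⟩ := ih _ h1; exact ⟨m, by omega, h'⟩
      | var hi h => obtain ⟨m, hm, h'⟩ := ih _ h; exact ⟨m, by omega, h'⟩
      | sA hax h hv => exact ⟨n, by omega, h⟩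
      | tA hax h hv => obtain ⟨m, hm, h'⟩ := ih _ h; exact ⟨m, by omega, h'⟩
      | seqA hax h1 h2 => obtain ⟨m, hm, h'⟩ := ih _ h1; exact ⟨m, by omega, h'⟩
      | teqA hax h1 h2 => obtain ⟨m, hm, h'⟩ := ih _ h1; exact ⟨m, by omega, h'⟩
      | sSub hax hY hlen hJ' hYc hargs => exact ⟨n, by omega, hYc⟩
      | tSub hax hY hlen hJ' hU hargs => obtain ⟨m, hm, h'⟩ := ih _ hU; exact ⟨m, by omega, h'⟩
      | seqSub1 hax hY hlen hJ' h1 h2 hargs => obtain ⟨m, hm, h'⟩ := ih _ h1; exact ⟨m, by omega, h'⟩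
      | seqSub2 hax hY hlf hlg hJ' h1 h2 hargs => obtain ⟨m, hm, h'⟩ := ih _ h1; exact ⟨m, by omega, h'⟩
      | teqSub1 hax hY hlen hJ' h1 h2 hargs => obtain ⟨m, hm, h'⟩ := ih _ h1; exact ⟨m, by omega, h'⟩
      | teqSub2 hax hY hlf hlg hJ' h1 h2 hargs => obtain ⟨m, hm, h'⟩ := ih _ h1; exact ⟨m, by omega, h'⟩

lemma ctx_nodup : ∀ n : ℕ, ∀ X : PreCtx A, DerAt Ax n (.ctx X) →
    (X.map Prod.fst).Nodup := by
  intro n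
  induction n using Nat.strong_induction_on with
  | _ n ih =>
    intro X hX
    match n, hX with
    | n+1, Or.inl hX => exact ih n (by omega) X hX
    | n+1, Or.inr hstep =>
      cases hstep with
      | ctx_nil => simp
      | ctx_cons hs hfresh hpre =>
        rename_i X' U x
        obtain ⟨m, hm, hc⟩ := der_ctx n _ hs
        have hnd := ih m (by omega) X' hc
        simp only [List.map_append, List.map_cons, List.map_nil]
        rw [List.nodup_append]
        refine ⟨hnd, List.nodup_singleton x, ?_⟩
        intro a ha b hb
        simp at hb
        obtain ⟨p, hp, rfl⟩ := List.mem_map.mp ha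
        subst hb
        exact hfresh p hp

lemma der_nodup {X : PreCtx A} (h : Derivable Ax (.ctx X)) : (X.map Prod.fst).Nodup := by
  obtain ⟨n, hn⟩ := h; exact ctx_nodup n X hn

lemma b1 {X : PreCtx A} {U : SortE A} (h : Derivable Ax (.sort X U)) :
    htCtx Ax X < ht Ax (.sort X U) := by
  have h1 := ht_pos h
  have hs := inversion h
  cases hs with
  | sA hax hc hv =>
    have h2 : Derivable Ax (.ctx X) := ⟨_, hc⟩
    have := htCtx_lt_ht_ctx h2
    have := ht_le hc
    omega
  | sSub hax hY hlen hJ hYc hargs =>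
    have h2 : Derivable Ax (.ctx _) := ⟨_, hYc⟩
    have := htCtx_lt_ht_ctx h2
    have := ht_le hYc
    omega


lemma canon_inv {X : PreCtx A} {u : Expr A} {S : SortE A} (h : CanonSort Ax X u S) :
    (∃ i, ∃ hi : i < X.length, u = .var (X[i]'hi).1 ∧ S = (X[i]'hi).2) ∨
    (∃ t f Xa V, introTerm Xa t V ∈ Ax ∧ u = .app t f ∧ S = V.substL (mkSub Xa f)) := by
  cases h with
  | var hi => exact Or.inl ⟨_, hi, rfl, rfl⟩
  | app hax => exact Or.inr ⟨_, _, _, _, hax, rfl, rfl⟩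

lemma canon_unique (hAx : IsPretheory Ax) {X : PreCtx A}
    (hnd : (X.map Prod.fst).Nodup) {u : Expr A} {S S' : SortE A}
    (h : CanonSort Ax X u S) (h' : CanonSort Ax X u S') : S = S' := by
  rcases canon_inv h with ⟨i, hi, rfl, rfl⟩ | ⟨t, f, Xa, V, hax, rfl, rfl⟩
  · rcases canon_inv h' with ⟨j, hj, he, rfl⟩ | ⟨t, f, Xa, V, hax, he, rfl⟩
    · have hxy : (X[j]'hj).1 = (X[i]'hi).1 := by
        injection he with h1; exact h1.symm
      have : (X.map Prod.fst)[j]'(by simpa) = (X.map Prod.fst)[i]'(by simpa) := by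
        simpa using hxy
      have hij : j = i := hnd.getElem_inj_iff.mp this
      subst hij; rfl
    · exact absurd he (by simp)
  · rcases canon_inv h' with ⟨j, hj, he, rfl⟩ | ⟨t', f', Xa', V', hax', he, rfl⟩
    · exact absurd he (by simp)
    · obtain ⟨ht', hf'⟩ : t = t' ∧ f = f' := by
        constructor <;> injection he <;> simp_all
      subst ht'; subst hf'
      obtain ⟨p, hp, hu⟩ := hAx.term_intro t
      have e1 := hu (Xa, V) hax
      have e2 := hu (Xa', V') hax'
      have : (Xa, V) = (Xa', V') := e1.trans e2.symm
      obtain ⟨h1, h2⟩ := Prod.mk.injEq .. ▸ this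
      subst h1; subst h2; rfl

/-- Combined statement of parts (c), (d), (e), (f). -/
def Good (Ax : Set (Judg A)) : Judg A → Prop
  | .sortEq X U U' =>
      Derivable Ax (.sort X U) ∧ Derivable Ax (.sort X U') ∧
      ht Ax (.sort X U) < ht Ax (.sortEq X U U') ∧
      ht Ax (.sort X U') < ht Ax (.sortEq X U U')
  | .termEq X u u' U =>
      Derivable Ax (.term X u U) ∧ Derivable Ax (.term X u' U) ∧
      ht Ax (.term X u U) < ht Ax (.termEq X u u' U) ∧
      ht Ax (.term X u' U) < ht Ax (.termEq X u u' U)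
  | .term X u U =>
      Derivable Ax (.sort X U) ∧ ht Ax (.sort X U) < ht Ax (.term X u U) ∧
      (∃ S, CanonSort Ax X u S) ∧
      ∀ S, CanonSort Ax X u S →
        Derivable Ax (.term X u S) ∧
        ht Ax (.term X u S) ≤ ht Ax (.term X u U) ∧
        (ht Ax (.term X u S) < ht Ax (.term X u U) ↔ U ≠ S) ∧
        Derivable Ax (.sortEq X S U) ∧
        ht Ax (.sortEq X S U) ≤ ht Ax (.term X u U)
  | _ => True

lemma good_term_self (hAx : IsPretheory Ax) {X : PreCtx A} {u : Expr A} {U : SortE A}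
    {k : ℕ} (hnd : (X.map Prod.fst).Nodup)
    (hder : Derivable Ax (.term X u U)) (hk : ht Ax (.term X u U) = k + 1)
    (hsort : DerAt Ax k (.sort X U)) (hcan : CanonSort Ax X u U) :
    Good Ax (.term X u U) := by
  have hs : ht Ax (.sort X U) ≤ k := ht_le hsort
  refine ⟨⟨k, hsort⟩, by omega, ⟨U, hcan⟩, ?_⟩
  intro S hS
  have hSU : S = U := canon_unique hAx hnd hS hcan
  subst hSU
  refine ⟨hder, le_refl _, by simp, ⟨k+1, Or.inr (Step.s1 hsort)⟩, ?_⟩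
  have : ht Ax (.sortEq X S S) ≤ k + 1 := ht_le (Or.inr (Step.s1 hsort))
  omega

lemma master (hAx : IsPretheory Ax) : ∀ n : ℕ, ∀ J : Judg A, DerAt Ax n J → Good Ax J := by
  intro n
  induction n using Nat.strong_induction_on with
  | _ n ih =>
    intro J hJ
    have hder : Derivable Ax J := ⟨n, hJ⟩
    have hle : ht Ax J ≤ n := ht_le hJ
    have hpos := ht_pos hder
    obtain ⟨k, hk⟩ : ∃ k, ht Ax J = k + 1 := ⟨ht Ax J - 1, by omega⟩
    have hkn : k < n := by omega
    have hst := inversion hder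
    have hk1 : ht Ax J - 1 = k := by omega
    rw [hk1] at hst
    have hnd : (J.ctxOf.map Prod.fst).Nodup := by
      obtain ⟨m, _, hc⟩ := der_ctx n J hJ
      exact ctx_nodup m _ hc
    clear hJ hle hk1
    cases hst with
    | ctx_nil => trivial
    | ctx_cons _ _ _ => trivial
    | sA _ _ _ => trivial
    | sSub _ _ _ _ _ _ => trivial
    | s1 h =>
      have := ht_le h
      exact ⟨⟨k, h⟩, ⟨k, h⟩, by omega, by omega⟩
    | s2 h =>
      obtain ⟨d1, d2, l1, l2⟩ := ih k hkn _ h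
      have := ht_le h
      exact ⟨d2, d1, by omega, by omega⟩
    | s3 h1 h2 =>
      obtain ⟨d1, d2, l1, l2⟩ := ih k hkn _ h1
      obtain ⟨d1', d2', l1', l2'⟩ := ih k hkn _ h2
      have := ht_le h1; have := ht_le h2
      exact ⟨d1, d2', by omega, by omega⟩
    | seqA hax h1 h2 =>
      have := ht_le h1; have := ht_le h2
      exact ⟨⟨k, h1⟩, ⟨k, h2⟩, by omega, by omega⟩
    | seqSub1 hax hY hlen hJ' h1 h2 hargs =>
      have := ht_le h1; have := ht_le h2
      exact ⟨⟨k, h1⟩, ⟨k, h2⟩, by omega, by omega⟩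
    | seqSub2 hax hY hlf hlg hJ' h1 h2 hargs =>
      have := ht_le h1; have := ht_le h2
      exact ⟨⟨k, h1⟩, ⟨k, h2⟩, by omega, by omega⟩
    | t1 h =>
      have := ht_le h
      exact ⟨⟨k, h⟩, ⟨k, h⟩, by omega, by omega⟩
    | t2 h =>
      obtain ⟨d1, d2, l1, l2⟩ := ih k hkn _ h
      have := ht_le h
      exact ⟨d2, d1, by omega, by omega⟩
    | t3 h1 h2 =>
      obtain ⟨d1, d2, l1, l2⟩ := ih k hkn _ h1
      obtain ⟨d1', d2', l1', l2'⟩ := ih k hkn _ h2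
      have := ht_le h1; have := ht_le h2
      exact ⟨d1, d2', by omega, by omega⟩
    | seqteq h1 h2 h3 h4 =>
      have := ht_le h3; have := ht_le h4
      exact ⟨⟨k, h3⟩, ⟨k, h4⟩, by omega, by omega⟩
    | teqA hax h1 h2 =>
      have := ht_le h1; have := ht_le h2
      exact ⟨⟨k, h1⟩, ⟨k, h2⟩, by omega, by omega⟩
    | teqSub1 hax hY hlen hJ' h1 h2 hargs =>
      have := ht_le h1; have := ht_le h2
      exact ⟨⟨k, h1⟩, ⟨k, h2⟩, by omega, by omega⟩
    | teqSub2 hax hY hlf hlg hJ' h1 h2 hargs =>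
      have := ht_le h1; have := ht_le h2
      exact ⟨⟨k, h1⟩, ⟨k, h2⟩, by omega, by omega⟩
    | var hi h =>
      exact good_term_self hAx hnd hder hk h (CanonSort.var hi)
    | tA hax h hv =>
      rename_i X u U
      obtain ⟨t, rfl⟩ := hAx.term_shape X u U hax
      exact good_term_self hAx hnd hder hk h (SortE.substL_ctxVars U X ▸ CanonSort.app hax)
    | tSub hax hY hlen hJ' hU hargs =>
      exact good_term_self hAx hnd hder hk hU (CanonSort.app hax)
    | seqt h1 h2 =>
      rename_i X U0 U u
      obtain ⟨dU0, dU, lU0, lU⟩ := ih k hkn _ h1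
      obtain ⟨_, _, hcan, hS⟩ := ih k hkn _ h2
      have hEq := ht_le h1
      have hTm := ht_le h2
      refine ⟨dU, by omega, hcan, ?_⟩
      intro S hSc
      obtain ⟨dS, leS, _, dEq, leEq⟩ := hS S hSc
      have hlt : ht Ax (.term X u S) < k + 1 := by omega
      refine ⟨dS, by omega, ⟨fun _ h => ?_, fun _ => by omega⟩, ?_, ?_⟩
      · subst h; omega
      · exact ⟨k + 1, Or.inr (Step.s3 (derAt_mono (by omega) (derAt_ht dEq)) h1)⟩
      · have : ht Ax (.sortEq X S U) ≤ k + 1 :=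
          ht_le (Or.inr (Step.s3 (derAt_mono (le_trans leEq hTm) (derAt_ht dEq)) h1))
        omega


lemma good_of_der (hAx : IsPretheory Ax) {J : Judg A} (h : Derivable Ax J) :
    Good Ax J := by
  obtain ⟨n, hn⟩ := h; exact master hAx n J hn

lemma good_term (hAx : IsPretheory Ax) {X : PreCtx A} {u : Expr A} {U : SortE A}
    (h : Derivable Ax (.term X u U)) :
    Derivable Ax (.sort X U) ∧ ht Ax (.sort X U) < ht Ax (.term X u U) ∧
      (∃ S, CanonSort Ax X u S) ∧
      ∀ S, CanonSort Ax X u S →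
        Derivable Ax (.term X u S) ∧
        ht Ax (.term X u S) ≤ ht Ax (.term X u U) ∧
        (ht Ax (.term X u S) < ht Ax (.term X u U) ↔ U ≠ S) ∧
        Derivable Ax (.sortEq X S U) ∧
        ht Ax (.sortEq X S U) ≤ ht Ax (.term X u U) :=
  good_of_der hAx h

lemma part_g (hAx : IsPretheory Ax) (X : PreCtx A) (u : Expr A) (h : DerTerm Ax X u)
    (S : SortE A) (hS : CanonSort Ax X u S) :
    htTerm Ax X u = ht Ax (.term X u S) := by
  obtain ⟨U, hU⟩ := h
  have hne : {n | ∃ U, DerAt Ax n (.term X u U)}.Nonempty := ⟨_, U, derAt_ht hU⟩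
  obtain ⟨U', hU'⟩ := Nat.sInf_mem hne
  apply le_antisymm
  · obtain ⟨_, _, _, hforall⟩ := good_term hAx hU
    obtain ⟨dS, _⟩ := hforall S hS
    exact Nat.sInf_le ⟨S, derAt_ht dS⟩
  · obtain ⟨_, _, _, hforall⟩ := good_term hAx ⟨_, hU'⟩
    obtain ⟨_, hle, _⟩ := hforall S hS
    exact hle.trans (ht_le hU')

lemma htTerm_le {n : ℕ} {X : PreCtx A} {u : Expr A} {U : SortE A}
    (h : DerAt Ax n (.term X u U)) : htTerm Ax X u ≤ n := Nat.sInf_le ⟨U, h⟩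

lemma part_i (hAx : IsPretheory Ax) : ∀ n : ℕ, ∀ (X : PreCtx A) (t : A.TermSym)
    (fs : List (Expr A)) (U : SortE A), DerAt Ax n (.term X (.app t fs) U) →
    ∀ i (hi : i < fs.length),
      htTerm Ax X (fs[i]'hi) < ht Ax (.term X (.app t fs) U) := by
  intro n
  induction n using Nat.strong_induction_on with
  | _ n ih =>
    intro X t fs U hJ i hi
    have hder : Derivable Ax (.term X (.app t fs) U) := ⟨n, hJ⟩
    have hle := ht_le hJ
    have hpos := ht_pos hder
    obtain ⟨k, hk⟩ : ∃ k, ht Ax (.term X (.app t fs) U) = k + 1 :=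
      ⟨ht Ax (.term X (.app t fs) U) - 1, by omega⟩
    have hst := inversion hder
    have hk1 : ht Ax (.term X (.app t fs) U) - 1 = k := by omega
    rw [hk1] at hst
    rw [hk]
    cases hst with
    | seqt h1 h2 =>
      have := ih k (by omega) X t fs _ h2 i hi
      have := ht_le h2
      omega
    | tA hax h hv =>
      obtain ⟨t', heq⟩ := hAx.term_shape X _ U hax
      have hfs : fs = ctxVars X := by injection heq
      subst hfs
      have hiX : i < X.length := by simpa [ctxVars] using hi
      have hg : (ctxVars X)[i]'hi = .var (X[i]'hiX).1 := by simp [ctxVars]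
      rw [hg]
      have := htTerm_le (hv i hiX)
      omega
    | tSub hax hY hlen hJ' hU hargs =>
      rename_i Xc UU
      have hiX : i < Xc.length := by omega
      have := htTerm_le (hargs i hiX hi)
      omega

lemma part_h (hAx : IsPretheory Ax) (X : PreCtx A) (T : A.SortSym) (fs : List (Expr A))
    (h : Derivable Ax (.sort X ⟨T, fs⟩)) :
    (∀ i (hi : i < fs.length), ∀ S, CanonSort Ax X (fs[i]'hi) S →
        ht Ax (.term X (fs[i]'hi) S) < ht Ax (.sort X ⟨T, fs⟩)) ∧
    (Judg.sort X ⟨T, fs⟩ ∉ Ax →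
      ∀ Xa : PreCtx A, introSort Xa T ∈ Ax →
        htMor Ax X Xa fs < ht Ax (.sort X ⟨T, fs⟩)) := by
  have hpos := ht_pos h
  obtain ⟨k, hk⟩ : ∃ k, ht Ax (.sort X ⟨T, fs⟩) = k + 1 :=
    ⟨ht Ax (.sort X ⟨T, fs⟩) - 1, by omega⟩
  have hst := inversion h
  have hk1 : ht Ax (.sort X ⟨T, fs⟩) - 1 = k := by omega
  rw [hk1] at hst
  rw [hk]
  cases hst with
  | sA hax hc hv =>
    have hfs : fs = ctxVars X := hAx.sort_shape X ⟨T, fs⟩ hax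
    subst hfs
    have hnd : (X.map Prod.fst).Nodup := der_nodup ⟨k, hc⟩
    constructor
    · intro i hi S hS
      have hiX : i < X.length := by simpa [ctxVars] using hi
      have hg : (ctxVars X)[i]'hi = .var (X[i]'hiX).1 := by simp [ctxVars]
      rw [hg] at hS ⊢
      have hcan : CanonSort Ax X (.var (X[i]'hiX).1) ((X[i]'hiX).2) := CanonSort.var hiX
      have : S = (X[i]'hiX).2 := canon_unique hAx hnd hS hcan
      subst this
      have := ht_le (hv i hiX)
      omega
    · intro hnot; exact absurd hax hnot
  | sSub hax hY hlen hJ' hYc hargs =>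
    rename_i Xc
    constructor
    · intro i hi S hS
      have hiX : i < Xc.length := by omega
      have hd := hargs i hiX hi
      obtain ⟨_, _, _, hforall⟩ := good_term hAx ⟨k, hd⟩
      obtain ⟨_, hle', _⟩ := hforall S hS
      have := ht_le hd
      omega
    · intro _ Xa haxa
      obtain ⟨Xu, haxu, huniq⟩ := hAx.sort_intro T
      have e1 : Xa = Xu := huniq Xa haxa
      have e2 : Xc = Xu := huniq Xc hax
      have hXa : Xa = Xc := e1.trans e2.symm
      subst hXa
      have hbY : htCtx Ax X < k + 1 := by
        have := htCtx_lt_ht_ctx ⟨k, hYc⟩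
        have := ht_le hYc
        omega
      have hbXa : htCtx Ax Xa < k + 1 := by
        have := b1 (show Derivable Ax (.sort Xa ⟨T, ctxVars Xa⟩) from ⟨k, hJ'⟩)
        have h2 : ht Ax (.sort Xa ⟨T, ctxVars Xa⟩) ≤ k := ht_le hJ'
        omega
      rw [htMor]
      refine max_lt hbY (max_lt hbXa (Nat.lt_succ_of_le (Finset.sup_le ?_)))
      intro i hi
      split
      · rename_i hcond
        exact ht_le (hargs i hcond.1 hcond.2)
      · omega

lemma part_a2 (X : PreCtx A) (h : Derivable Ax (.ctx X)) :
    htCtx Ax X = 0 ↔ X = [] := by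
  constructor
  · intro h0
    rcases ctx_inv h with rfl | ⟨X', x, U, rfl, _, hd⟩
    · rfl
    · rw [htCtx_concat'] at h0
      have := ht_pos ⟨_, hd⟩
      omega
  · rintro rfl; rfl

lemma part_b2 : ∀ n : ℕ, ∀ X : PreCtx A, X.length = n → Derivable Ax (.ctx X) →
    ∀ i, i < X.length → htCtx Ax (X.take i) < htCtx Ax X := by
  intro n
  induction n using Nat.strong_induction_on with
  | _ n ih =>
    intro X hn hX i hi
    rcases ctx_inv hX with rfl | ⟨X', x, U, rfl, hfresh, hd⟩
    · simp at hi
    · have hsort : Derivable Ax (.sort X' U) := ⟨_, hd⟩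
      have hb1 : htCtx Ax X' < ht Ax (.sort X' U) := b1 hsort
      rw [htCtx_concat']
      rcases Nat.lt_or_ge i X'.length with h' | h'
      · have hcX' : Derivable Ax (.ctx X') := by
          obtain ⟨m, _, hm⟩ := der_ctx _ _ hd
          exact ⟨m, hm⟩
        have hlt : X'.length < n := by
          simp only [List.length_append, List.length_cons, List.length_nil] at hn
          omega
        have hstep := ih X'.length hlt X' rfl hcX' i h'
        have htake : (X' ++ [(x, U)]).take i = X'.take i :=
          List.take_append_of_le_length (by omega)
        rw [htake]
        omega
      · have hieq : i = X'.length := by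
          simp only [List.length_append, List.length_cons, List.length_nil] at hi
          omega
        subst hieq
        have htake : (X' ++ [(x, U)]).take X'.length = X' := by simp
        rw [htake]; exact hb1


lemma part_j1 (X Y : PreCtx A) (f : List (Expr A)) (h : IsMor Ax X Y f) :
    ∀ i (hi : i < f.length), htTerm Ax X (f[i]'hi) ≤ htMor Ax X Y f := by
  obtain ⟨hX, hY, hlen, hterms⟩ := h
  intro i hi
  have hiY : i < Y.length := by omega
  have hd := hterms i hiY hi
  have h1 : htTerm Ax X (f[i]'hi) ≤ ht Ax (.term X (f[i]'hi) (subPre Y f i hiY)) :=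
    Nat.sInf_le ⟨_, derAt_ht hd⟩
  have h2 : ht Ax (.term X (f[i]'hi) (subPre Y f i hiY)) ≤
      (Finset.range Y.length).sup fun j =>
        if h : j < Y.length ∧ j < f.length then
          ht Ax (.term X (f[j]'h.2) (subPre Y f j h.1)) else 0 := by
    have hmem : i ∈ Finset.range Y.length := Finset.mem_range.mpr hiY
    have := Finset.le_sup (f := fun j =>
        if h : j < Y.length ∧ j < f.length then
          ht Ax (.term X (f[j]'h.2) (subPre Y f j h.1)) else 0) hmem
    have heq : (if h : i < Y.length ∧ i < f.length then
        ht Ax (.term X (f[i]'h.2) (subPre Y f i h.1)) else 0) =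
        ht Ax (.term X (f[i]'hi) (subPre Y f i hiY)) := dif_pos ⟨hiY, hi⟩
    exact le_trans heq.ge this
  calc htTerm Ax X (f[i]'hi) ≤ _ := h1
    _ ≤ _ := h2
    _ ≤ htMor Ax X Y f := le_max_of_le_right (le_max_right _ _)

lemma part_j2 (X Y : PreCtx A) (f g : List (Expr A)) (h : MorEq Ax X Y f g) :
    htMor Ax X Y f ≤ htMorEq Ax X Y f g ∧ htMor Ax X Y g ≤ htMorEq Ax X Y f g :=
  ⟨le_max_left _ _, le_max_of_le_right (le_max_left _ _)⟩

lemma part_a3 (X Y : PreCtx A) (f : List (Expr A)) (h : IsMor Ax X Y f) :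
    htMor Ax X Y f = 0 ↔ X = [] ∧ Y = [] ∧ f = [] := by
  obtain ⟨hX, hY, hlen, hterms⟩ := h
  constructor
  · intro h0
    rw [htMor, Nat.max_eq_zero_iff, Nat.max_eq_zero_iff] at h0
    obtain ⟨h1, h2, _⟩ := h0
    have hXe := (part_a2 X hX).mp h1
    have hYe := (part_a2 Y hY).mp h2
    refine ⟨hXe, hYe, ?_⟩
    subst hYe
    exact List.length_eq_zero_iff.mp hlen
  · rintro ⟨rfl, rfl, rfl⟩
    rw [htMor]
    simp [htCtx]


end Aux

/-- **properties of the height function.**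
(a) every derivable judgment has height at least 1; the empty precontext is the
only context of height 0; the empty tuple `() : ∅ → ∅` is the only context
morphism of height 0.
(b) `ht(X ⊢ U sort) > ht(X)`, and truncating a context strictly decreases height.
(c), (d), (e): the constituents of a derivable (sort/term) (equality) judgment
are derivable of strictly smaller height.
(f) `X ⊢ u : 𝒮(u)` is derivable, with the stated height comparisons, and the
inequality is strict iff `U ≠ 𝒮(u)`; also `X ⊢ 𝒮(u) ≡ U sort` is derivable
with `ht ≤ ht(X ⊢ u:U)`.
(g) `ht(X ⊢ u term) = ht(X ⊢ u : 𝒮(u))`.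
(h) `ht(X ⊢ T(f₁,…,f_k) sort) > ht(X ⊢ fᵢ : 𝒮(fᵢ))`, and if the judgment is not
an axiom, also `ht > ht((f₁,…,f_k) : X → A)` for `A` the context of the axiom
introducing `T`.
(i) `ht(X ⊢ t(f₁,…,f_k) : U) > ht(X ⊢ fᵢ term)`.
(j) heights of the entries of a context morphism are at most the height of the
morphism, and the heights of the two sides of a morphism equality are at most
its height. -/
theorem height_properties (A : Alphabet) (Ax : Set (Judg A)) (hAx : IsPretheory Ax) :
    -- (a)
    (∀ J : Judg A, Derivable Ax J → 1 ≤ ht Ax J) ∧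
    (∀ X : PreCtx A, Derivable Ax (.ctx X) → (htCtx Ax X = 0 ↔ X = [])) ∧
    (∀ (X Y : PreCtx A) (f : List (Expr A)), IsMor Ax X Y f →
        (htMor Ax X Y f = 0 ↔ X = [] ∧ Y = [] ∧ f = [])) ∧
    -- (b)
    (∀ (X : PreCtx A) (U : SortE A), Derivable Ax (.sort X U) →
        htCtx Ax X < ht Ax (.sort X U)) ∧
    (∀ X : PreCtx A, Derivable Ax (.ctx X) → ∀ i, i < X.length →
        htCtx Ax (X.take i) < htCtx Ax X) ∧
    -- (c)
    (∀ (X : PreCtx A) (U U' : SortE A), Derivable Ax (.sortEq X U U') →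
        Derivable Ax (.sort X U) ∧ Derivable Ax (.sort X U') ∧
        ht Ax (.sort X U) < ht Ax (.sortEq X U U') ∧
        ht Ax (.sort X U') < ht Ax (.sortEq X U U')) ∧
    -- (d)
    (∀ (X : PreCtx A) (u : Expr A) (U : SortE A), Derivable Ax (.term X u U) →
        Derivable Ax (.sort X U) ∧ ht Ax (.sort X U) < ht Ax (.term X u U)) ∧
    -- (e)
    (∀ (X : PreCtx A) (u u' : Expr A) (U : SortE A), Derivable Ax (.termEq X u u' U) →
        Derivable Ax (.term X u U) ∧ Derivable Ax (.term X u' U) ∧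
        ht Ax (.term X u U) < ht Ax (.termEq X u u' U) ∧
        ht Ax (.term X u' U) < ht Ax (.termEq X u u' U)) ∧
    -- (f)
    (∀ (X : PreCtx A) (u : Expr A) (U : SortE A), Derivable Ax (.term X u U) →
        (∃ S, CanonSort Ax X u S) ∧
        ∀ S, CanonSort Ax X u S →
          Derivable Ax (.term X u S) ∧
          ht Ax (.term X u S) ≤ ht Ax (.term X u U) ∧
          (ht Ax (.term X u S) < ht Ax (.term X u U) ↔ U ≠ S) ∧
          Derivable Ax (.sortEq X S U) ∧
          ht Ax (.sortEq X S U) ≤ ht Ax (.term X u U)) ∧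
    -- (g)
    (∀ (X : PreCtx A) (u : Expr A), DerTerm Ax X u →
        ∀ S, CanonSort Ax X u S → htTerm Ax X u = ht Ax (.term X u S)) ∧
    -- (h)
    (∀ (X : PreCtx A) (T : A.SortSym) (fs : List (Expr A)),
        Derivable Ax (.sort X ⟨T, fs⟩) →
        (∀ i (hi : i < fs.length), ∀ S, CanonSort Ax X (fs[i]'hi) S →
            ht Ax (.term X (fs[i]'hi) S) < ht Ax (.sort X ⟨T, fs⟩)) ∧
        (Judg.sort X ⟨T, fs⟩ ∉ Ax →
          ∀ Xa : PreCtx A, introSort Xa T ∈ Ax →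
            htMor Ax X Xa fs < ht Ax (.sort X ⟨T, fs⟩))) ∧
    -- (i)
    (∀ (X : PreCtx A) (t : A.TermSym) (fs : List (Expr A)) (U : SortE A),
        Derivable Ax (.term X (.app t fs) U) →
        ∀ i (hi : i < fs.length),
          htTerm Ax X (fs[i]'hi) < ht Ax (.term X (.app t fs) U)) ∧
    -- (j)
    (∀ (X Y : PreCtx A) (f : List (Expr A)), IsMor Ax X Y f →
        ∀ i (hi : i < f.length), htTerm Ax X (f[i]'hi) ≤ htMor Ax X Y f) ∧
    (∀ (X Y : PreCtx A) (f g : List (Expr A)), MorEq Ax X Y f g →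
        htMor Ax X Y f ≤ htMorEq Ax X Y f g ∧
        htMor Ax X Y g ≤ htMorEq Ax X Y f g) := by

  refine ⟨fun J h => ht_pos h, fun X h => part_a2 X h, part_a3, fun X U h => b1 h,
    fun X h i hi => part_b2 X.length X rfl h i hi, ?_, ?_, ?_, ?_, part_g hAx,
    part_h hAx, ?_, part_j1, part_j2⟩
  · intro X U U' h
    exact good_of_der hAx h
  · intro X u U h
    obtain ⟨d, l, _⟩ := good_term hAx h
    exact ⟨d, l⟩
  · intro X u u' U h
    exact good_of_der hAx h
  · intro X u U h
    obtain ⟨_, _, hc, hf⟩ := good_term hAx h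
    exact ⟨hc, hf⟩
  · intro X t fs U h
    obtain ⟨n, hn⟩ := h
    exact part_i hAx n X t fs U hn

end GATPaper
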